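/- Let ε > 0, χ ≥ 1, C₀ > 0 and λ > 0 satisfy √λ > ((1+2μ₁ε²)/χ)·(1 + μ₁(χ²+ε²)). Set p := 1 + 2μ₁ε², δ := χ√λ/2 and α := λε²/(λε² + 4δ²). Then there is no differentiable function E : [0,∞) → ℝ satisfying simultaneously: E(t) > −1 for all t ≥ 0, E(t) ≤ C₀ e^{−μ₁ t} for all t ≥ 0, and E'(t) ≤ F_{p,δ}(E(t)) for all t ≥ 0. -/

import Mathlib

open Real Set

/-- The function `F_{p,δ}` from the paper, depending on parameters `ε`, `lam` (the
voltage parameter `λ`), `δ` and `p`; here `μ₁ = π²/4`. -/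
noncomputable def Fpd (ε lam δ p y : ℝ) : ℝ :=
  π ^ 2 / 4 + (4 * δ * lam / (p * (lam * ε ^ 2 + 4 * δ ^ 2))) *
    (π ^ 2 / 4 * ε ^ 2 / p + p / (4 * δ) + (p * (π ^ 2 / 4) * ε ^ 2 / (p + 1)) * y
      - 1 / (1 + y))

set_option maxHeartbeats 1000000 in
theorem no_global_solution_functional (ε χ C₀ lam : ℝ) (hε : 0 < ε) (hχ : 1 ≤ χ)
    (hC₀ : 0 < C₀) (hlam : 0 < lam)
    (hbig : Real.sqrt lam >
      (1 + 2 * (π ^ 2 / 4) * ε ^ 2) / χ * (1 + (π ^ 2 / 4) * (χ ^ 2 + ε ^ 2)))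
    (p δ α : ℝ) (hp : p = 1 + 2 * (π ^ 2 / 4) * ε ^ 2)
    (hδ : δ = χ * Real.sqrt lam / 2)
    (hα : α = lam * ε ^ 2 / (lam * ε ^ 2 + 4 * δ ^ 2)) :
    ¬ ∃ E : ℝ → ℝ, DifferentiableOn ℝ E (Set.Ici (0 : ℝ)) ∧
        (∀ t ∈ Set.Ici (0 : ℝ), -1 < E t) ∧
        (∀ t ∈ Set.Ici (0 : ℝ), E t ≤ C₀ * Real.exp (-(π ^ 2 / 4) * t)) ∧
        (∀ t ∈ Set.Ici (0 : ℝ),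
          derivWithin E (Set.Ici (0 : ℝ)) t ≤ Fpd ε lam δ p (E t)) := by
  rintro ⟨E, hdiff, hlow, hdec, hode⟩
  have hμ0 : (0:ℝ) < π ^ 2 / 4 := by positivity
  set μ : ℝ := π ^ 2 / 4 with hμ
  clear_value μ
  have hs0 : 0 < Real.sqrt lam := Real.sqrt_pos.2 hlam
  set s := Real.sqrt lam with hsdef
  have hs2 : s ^ 2 = lam := Real.sq_sqrt hlam.le
  clear_value s
  have hχ0 : (0:ℝ) < χ := lt_of_lt_of_le one_pos hχ
  have hp0 : 0 < p := by rw [hp]; positivity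
  have hδ0 : 0 < δ := by rw [hδ]; positivity
  have hden : 0 < lam * ε ^ 2 + 4 * δ ^ 2 := by positivity
  obtain ⟨K, hK⟩ : ∃ K : ℝ, K = 4 * δ * lam / (p * (lam * ε ^ 2 + 4 * δ ^ 2)) := ⟨_, rfl⟩
  have hK0 : 0 < K := by rw [hK]; positivity
  obtain ⟨a, ha⟩ : ∃ a : ℝ, a = p * μ * ε ^ 2 / (p + 1) := ⟨_, rfl⟩
  have ha0 : 0 < a := by rw [ha]; positivity
  -- hypothesis rewritten
  have hbig' : χ * s > p * (1 + μ * (χ ^ 2 + ε ^ 2)) := by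
    rw [div_mul_eq_mul_div] at hbig
    have h := (div_lt_iff₀ hχ0).mp hbig
    rw [hp]; nlinarith [h]
  -- key polynomial inequality
  have hkey : p ^ 2 * (1 + μ * (ε ^ 2 + χ ^ 2)) < 2 * χ * s * (1 + μ * ε ^ 2) := by
    have h2 : p < 2 * (1 + μ * ε ^ 2) := by rw [hp]; nlinarith
    nlinarith [hbig', hp0, hμ0, sq_nonneg ε, sq_nonneg χ, mul_pos hχ0 hs0]
  -- F(0) < 0
  have hF0 : Fpd ε lam δ p 0 < 0 := by
    have hrepr : Fpd ε lam δ p 0 =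
        (μ * p ^ 2 * (ε ^ 2 + χ ^ 2) + 2 * χ * s * μ * ε ^ 2 + p ^ 2 - 2 * χ * s * p) /
          (p ^ 2 * (ε ^ 2 + χ ^ 2)) := by
      rw [Fpd, hδ, ← hs2, ← hμ]
      field_simp
      ring
    rw [hrepr]
    apply div_neg_of_neg_of_pos
    · nlinarith [hkey]
    · positivity
  -- F(y) in terms of F(0)
  have hrepr2 : ∀ y : ℝ, Fpd ε lam δ p y = Fpd ε lam δ p 0 + K * (a * y + 1 - 1 / (1 + y)) := by
    intro y
    rw [Fpd, Fpd, ← hμ, ← hK, ← ha]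
    ring_nf
  obtain ⟨F0, hF0def⟩ : ∃ F0 : ℝ, F0 = Fpd ε lam δ p 0 := ⟨_, rfl⟩
  rw [← hF0def] at hF0 hrepr2
  -- choose y₀
  obtain ⟨y₀, hy₀def⟩ : ∃ y₀ : ℝ, y₀ = min 1 (-F0 / (2 * K * (a + 1))) := ⟨_, rfl⟩
  have hy₀pos : 0 < y₀ := by
    rw [hy₀def]
    apply lt_min one_pos
    apply div_pos (by linarith) (by positivity)
  have hy₀le1 : y₀ ≤ 1 := hy₀def ▸ min_le_left _ _
  have hFy₀ : Fpd ε lam δ p y₀ < 0 := by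
    rw [hrepr2 y₀]
    have hinv : (1 / (1 + y₀)) * (1 + y₀) = 1 := by field_simp
    have h1 : 1 - 1 / (1 + y₀) ≤ y₀ := by nlinarith [sq_nonneg y₀]
    have h2 : K * (a * y₀ + 1 - 1 / (1 + y₀)) ≤ K * ((a + 1) * y₀) := by
      apply mul_le_mul_of_nonneg_left _ hK0.le
      nlinarith
    have hKne : K ≠ 0 := ne_of_gt hK0
    have hane : a + 1 ≠ 0 := by positivity
    have h3 : K * ((a + 1) * y₀) ≤ -F0 / 2 := by
      have hmin : y₀ ≤ -F0 / (2 * K * (a + 1)) := hy₀def ▸ min_le_right _ _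
      have h4 : K * ((a + 1) * (-F0 / (2 * K * (a + 1)))) = -F0 / 2 := by field_simp
      calc K * ((a + 1) * y₀) ≤ K * ((a + 1) * (-F0 / (2 * K * (a + 1)))) := by
            apply mul_le_mul_of_nonneg_left _ hK0.le
            exact mul_le_mul_of_nonneg_left hmin (by positivity)
        _ = -F0 / 2 := h4
    linarith
  -- monotonicity of Fpd
  have hmono : ∀ y : ℝ, -1 < y → y ≤ y₀ → Fpd ε lam δ p y ≤ Fpd ε lam δ p y₀ := by
    intro y hy hyy
    rw [hrepr2 y, hrepr2 y₀]
    have h1 : 1 / (1 + y₀) ≤ 1 / (1 + y) :=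
      one_div_le_one_div_of_le (by linarith) (by linarith)
    have h2 : a * y ≤ a * y₀ := mul_le_mul_of_nonneg_left hyy ha0.le
    have : K * (a * y + 1 - 1 / (1 + y)) ≤ K * (a * y₀ + 1 - 1 / (1 + y₀)) := by
      apply mul_le_mul_of_nonneg_left _ hK0.le
      linarith
    linarith
  obtain ⟨c, hc⟩ : ∃ c : ℝ, c = -Fpd ε lam δ p y₀ := ⟨_, rfl⟩
  have hc0 : 0 < c := by rw [hc]; linarith
  -- choose T
  obtain ⟨T, hT⟩ : ∃ T : ℝ, T = max 0 (Real.log (C₀ / y₀) / μ) := ⟨_, rfl⟩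
  have hT0 : (0:ℝ) ≤ T := hT ▸ le_max_left _ _
  have hbound : ∀ t : ℝ, T ≤ t → E t ≤ y₀ := by
    intro t ht
    have ht0 : (0:ℝ) ≤ t := le_trans hT0 ht
    have h1 : E t ≤ C₀ * Real.exp (-μ * t) := hdec t ht0
    have h2 : Real.exp (-μ * t) ≤ y₀ / C₀ := by
      rw [← Real.exp_log (show (0:ℝ) < y₀ / C₀ by positivity)]
      apply Real.exp_le_exp.2
      have hlog : Real.log (y₀ / C₀) = - Real.log (C₀ / y₀) := by
        rw [← Real.log_inv]
        congr 1
        rw [inv_div]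
      have h3 : Real.log (C₀ / y₀) / μ ≤ t := le_trans (hT ▸ le_max_right _ _) ht
      have h4 : Real.log (C₀ / y₀) ≤ t * μ := (div_le_iff₀ hμ0).mp h3
      rw [hlog]; linarith
    calc E t ≤ C₀ * Real.exp (-μ * t) := h1
      _ ≤ C₀ * (y₀ / C₀) := mul_le_mul_of_nonneg_left h2 hC₀.le
      _ = y₀ := by field_simp
  -- antitone auxiliary function
  have hanti : AntitoneOn (fun t => E t + c * t) (Ici T) := by
    apply antitoneOn_of_deriv_nonpos (convex_Ici T)
    · apply ContinuousOn.add
      · exact hdiff.continuousOn.mono (Ici_subset_Ici.2 hT0)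
      · exact (continuous_const.mul continuous_id).continuousOn
    · intro x hx
      rw [interior_Ici] at hx
      have hx0 : 0 < x := lt_of_le_of_lt hT0 hx
      have hEx : DifferentiableAt ℝ E x :=
        (hdiff x (le_of_lt hx0)).differentiableAt (Ici_mem_nhds hx0)
      exact (hEx.add ((differentiableAt_const c).mul differentiableAt_id)).differentiableWithinAt
    · intro x hx
      rw [interior_Ici] at hx
      have hx0 : 0 < x := lt_of_le_of_lt hT0 hx
      have hEx : DifferentiableAt ℝ E x :=
        (hdiff x (le_of_lt hx0)).differentiableAt (Ici_mem_nhds hx0)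
      have hd : deriv (fun t => E t + c * t) x = deriv E x + c := by
        have h := (hEx.hasDerivAt.add ((hasDerivAt_id x).const_mul c)).deriv
        simp at h
        exact h
      rw [hd]
      have h1 : deriv E x = derivWithin E (Ici 0) x :=
        (derivWithin_of_mem_nhds (Ici_mem_nhds hx0)).symm
      have h2 := hode x (le_of_lt hx0)
      have h3 := hmono (E x) (hlow x (le_of_lt hx0)) (hbound x hx.le)
      rw [h1]
      rw [hc] at *
      linarith
  -- final contradiction
  have hET : -1 < E T := hlow T hT0
  obtain ⟨t₁, ht₁⟩ : ∃ t₁ : ℝ, t₁ = T + (E T + 1) / c + 1 := ⟨_, rfl⟩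
  have hfrac : 0 < (E T + 1) / c := div_pos (by linarith) hc0
  have ht₁T : T ≤ t₁ := by rw [ht₁]; linarith
  have h5 := hanti (mem_Ici.2 le_rfl) (mem_Ici.2 ht₁T) ht₁T
  simp only [] at h5
  have hlow1 : -1 < E t₁ := hlow t₁ (le_trans hT0 ht₁T)
  have hct₁ : c * t₁ = c * T + (E T + 1) + c := by
    rw [ht₁]; field_simp
  linarith
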